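/- Let N = (𝒱, ℰ, c) be a flow network with source s and sink t, and let v ∈ 𝒱 ∖ {s, t} be a node such that (s, v) ∈ ℰ with c(s,v) = ∞ and every edge (v, w) ∈ ℰ leaving v has c(v,w) = ∞. Let N′ be the flow network obtained from N by deleting v together with all edges incident to v, and adding for each out-neighbor w of v in N an edge (s, w) with capacity ∞ (leaving existing infinite-capacity edges unchanged). Then the map 𝒮 ↦ 𝒮 ∖ {v} is a bijection between the finite-capacity (s,t)-cuts of N and the finite-capacity (s,t)-cuts of N′ that preserves cut capacity; in particular, the minimum (s,t)-cut capacities of N and N′ are equal. -/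

import Mathlib

open scoped ENNReal

/-- `f` is an `(s,t)`-flow for the capacity function `c`. -/
def IsFlow {ν : Type} [Fintype ν] (c : ν → ν → ℝ≥0∞) (s t : ν) (f : ν → ν → ℝ) : Prop :=
  (∀ u v, (f u v : EReal) ≤ (c u v : EReal)) ∧
  (∀ u v, f u v = - f v u) ∧
  (∀ u, u ≠ s → u ≠ t → ∑ v, f u v = 0)

/-- The value of a flow. -/
noncomputable def flowValue {ν : Type} [Fintype ν] (f : ν → ν → ℝ) (s : ν) : ℝ :=
  ∑ v, f s v

/-- `f` is a maximum `(s,t)`-flow. -/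
def IsMaxFlow {ν : Type} [Fintype ν] (c : ν → ν → ℝ≥0∞) (s t : ν) (f : ν → ν → ℝ) : Prop :=
  IsFlow c s t f ∧ ∀ g, IsFlow c s t g → flowValue g s ≤ flowValue f s

/-- `(u,v)` is an edge of the residual network, i.e. `r_f(u,v) = c(u,v) - f(u,v) > 0`. -/
def ResidualEdge {ν : Type} (c : ν → ν → ℝ≥0∞) (f : ν → ν → ℝ) (u v : ν) : Prop :=
  (f u v : EReal) < (c u v : EReal)

open scoped Classical in
/-- The capacity of the `(s,t)`-cut `(S, 𝒱 ∖ S)`. -/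
noncomputable def cutCap {ν : Type} [Fintype ν] (c : ν → ν → ℝ≥0∞) (S : Set ν) : ℝ≥0∞ :=
  ∑ u, ∑ v, if u ∈ S ∧ v ∉ S then c u v else 0


open scoped Classical

lemma single_le_cutCap {ν : Type} [Fintype ν] (c : ν → ν → ℝ≥0∞) (S : Set ν)
    {u w : ν} (hu : u ∈ S) (hw : w ∉ S) : c u w ≤ cutCap c S := by
  unfold cutCap
  calc c u w = (if u ∈ S ∧ w ∉ S then c u w else 0) := by rw [if_pos ⟨hu, hw⟩]
    _ ≤ ∑ y, (if u ∈ S ∧ y ∉ S then c u y else 0) :=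
        Finset.single_le_sum (f := fun y => if u ∈ S ∧ y ∉ S then c u y else 0)
          (fun _ _ => zero_le) (Finset.mem_univ w)
    _ ≤ ∑ x, ∑ y, (if x ∈ S ∧ y ∉ S then c x y else 0) :=
        Finset.single_le_sum (f := fun x => ∑ y, if x ∈ S ∧ y ∉ S then c x y else 0)
          (fun _ _ => zero_le) (Finset.mem_univ u)

lemma cutCap_subtype_eq {ν : Type} [Fintype ν] [DecidableEq ν]
    (c : ν → ν → ℝ≥0∞) (s v : ν)
    (c' : {x : ν // x ≠ v} → {x : ν // x ≠ v} → ℝ≥0∞)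
    (hc' : ∀ x y : {x : ν // x ≠ v},
      c' x y = if (x : ν) = s ∧ c v ↑y ≠ 0 then ⊤ else c ↑x ↑y)
    (S : Set ν) (hv : v ∈ S) (hz : ∀ w, w ∉ S → c v w = 0) :
    cutCap c' {x : {x : ν // x ≠ v} | ↑x ∈ S} = cutCap c S := by
  unfold cutCap
  have h1 : ∀ x y : {x : ν // x ≠ v},
      (if x ∈ {x : {x : ν // x ≠ v} | ↑x ∈ S} ∧ y ∉ {x : {x : ν // x ≠ v} | ↑x ∈ S}
        then c' x y else 0)
      = (if (x : ν) ∈ S ∧ (y : ν) ∉ S then c ↑x ↑y else 0) := by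
    intro x y
    simp only [Set.mem_setOf_eq]
    by_cases h : (x : ν) ∈ S ∧ (y : ν) ∉ S
    · rw [if_pos h, if_pos h, hc', if_neg]
      rintro ⟨-, hy⟩
      exact hy (hz _ h.2)
    · rw [if_neg h, if_neg h]
  have hsub : ∀ x : ν, x ∈ Finset.univ.erase v ↔ x ≠ v := by simp
  calc (∑ x : {x : ν // x ≠ v}, ∑ y : {x : ν // x ≠ v},
          if x ∈ {x : {x : ν // x ≠ v} | ↑x ∈ S} ∧ y ∉ {x : {x : ν // x ≠ v} | ↑x ∈ S}
            then c' x y else 0)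
      = ∑ x : {x : ν // x ≠ v}, ∑ y : {x : ν // x ≠ v},
          (if (x : ν) ∈ S ∧ (y : ν) ∉ S then c ↑x ↑y else 0) := by
        exact Finset.sum_congr rfl fun x _ => Finset.sum_congr rfl fun y _ => h1 x y
    _ = ∑ x ∈ Finset.univ.erase v, ∑ y ∈ Finset.univ.erase v,
          (if x ∈ S ∧ y ∉ S then c x y else 0) := by
        rw [Finset.sum_subtype (Finset.univ.erase v) hsub
          (fun x => ∑ y ∈ Finset.univ.erase v, (if x ∈ S ∧ y ∉ S then c x y else 0))]
        refine Finset.sum_congr rfl fun x _ => ?_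
        rw [Finset.sum_subtype (Finset.univ.erase v) hsub
          (fun y => if (x : ν) ∈ S ∧ y ∉ S then c ↑x y else 0)]
    _ = ∑ x ∈ Finset.univ.erase v, ∑ y, (if x ∈ S ∧ y ∉ S then c x y else 0) := by
        refine Finset.sum_congr rfl fun x _ => ?_
        refine Finset.sum_erase _ ?_
        rw [if_neg]; rintro ⟨-, h⟩; exact h hv
    _ = ∑ x, ∑ y, (if x ∈ S ∧ y ∉ S then c x y else 0) := by
        refine Finset.sum_erase _ ?_
        refine Finset.sum_eq_zero fun y _ => ?_
        by_cases hy : y ∈ S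
        · rw [if_neg]; rintro ⟨-, h⟩; exact h hy
        · rw [if_pos ⟨hv, hy⟩, hz y hy]

/-- Let `v ∉ {s,t}` be a node with `c(s,v) = ∞` all of whose outgoing
edges have infinite capacity, and let `N′` be obtained by deleting `v` (and its incident
edges) and connecting `s` to every out-neighbour of `v` by an infinite-capacity edge.
Then `𝒮 ↦ 𝒮 ∖ {v}` is a capacity-preserving bijection between the finite-capacity
`(s,t)`-cuts of `N` and those of `N′`; in particular the minimum `(s,t)`-cut capacities
agree. -/
theorem remove_infinite_capacity_source_neighbor {ν : Type} [Fintype ν] [DecidableEq ν]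
    (c : ν → ν → ℝ≥0∞) (s t : ν) (hst : s ≠ t)
    (v : ν) (hvs : v ≠ s) (hvt : v ≠ t)
    (hsv : c s v = ⊤) (hout : ∀ w : ν, c v w ≠ 0 → c v w = ⊤)
    (c' : {x : ν // x ≠ v} → {x : ν // x ≠ v} → ℝ≥0∞)
    (hc' : ∀ x y : {x : ν // x ≠ v},
      c' x y = if (x : ν) = s ∧ c v ↑y ≠ 0 then ⊤ else c ↑x ↑y) :
    Set.BijOn (fun S : Set ν => ({x : {x : ν // x ≠ v} | ↑x ∈ S}))
      {S : Set ν | s ∈ S ∧ t ∉ S ∧ cutCap c S ≠ ⊤}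
      {S' : Set {x : ν // x ≠ v} |
        ⟨s, Ne.symm hvs⟩ ∈ S' ∧ ⟨t, Ne.symm hvt⟩ ∉ S' ∧ cutCap c' S' ≠ ⊤} ∧
    (∀ S : Set ν, s ∈ S → t ∉ S → cutCap c S ≠ ⊤ →
      cutCap c' {x : {x : ν // x ≠ v} | ↑x ∈ S} = cutCap c S) ∧
    sInf {x : ℝ≥0∞ | ∃ S : Set ν, s ∈ S ∧ t ∉ S ∧ cutCap c S = x} =
      sInf {x : ℝ≥0∞ | ∃ S' : Set {x : ν // x ≠ v},
        ⟨s, Ne.symm hvs⟩ ∈ S' ∧ ⟨t, Ne.symm hvt⟩ ∉ S' ∧ cutCap c' S' = x} := by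
  -- v belongs to any finite-capacity cut
  have hmem : ∀ S : Set ν, s ∈ S → cutCap c S ≠ ⊤ → v ∈ S := by
    intro S hs hfin
    by_contra hv
    exact hfin (top_le_iff.mp (hsv ▸ single_le_cutCap c S hs hv))
  have hzero : ∀ S : Set ν, cutCap c S ≠ ⊤ → v ∈ S → ∀ w, w ∉ S → c v w = 0 := by
    intro S hfin hv w hw
    by_contra h
    exact hfin (top_le_iff.mp ((hout w h) ▸ single_le_cutCap c S hv hw))
  have hcap : ∀ S : Set ν, s ∈ S → t ∉ S → cutCap c S ≠ ⊤ →
      cutCap c' {x : {x : ν // x ≠ v} | ↑x ∈ S} = cutCap c S := by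
    intro S hs ht hfin
    exact cutCap_subtype_eq c s v c' hc' S (hmem S hs hfin) (hzero S hfin (hmem S hs hfin))
  -- surjectivity data
  have hsurj : ∀ S' : Set {x : ν // x ≠ v}, ⟨s, Ne.symm hvs⟩ ∈ S' → ⟨t, Ne.symm hvt⟩ ∉ S' →
      cutCap c' S' ≠ ⊤ → ∃ S : Set ν, (s ∈ S ∧ t ∉ S ∧ cutCap c S ≠ ⊤) ∧
        {x : {x : ν // x ≠ v} | ↑x ∈ S} = S' ∧ cutCap c S = cutCap c' S' := by
    intro S' hs' ht' hfin'
    set S : Set ν := insert v {x : ν | ∃ h : x ≠ v, (⟨x, h⟩ : {x : ν // x ≠ v}) ∈ S'} with hSdef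
    have himg : {x : {x : ν // x ≠ v} | ↑x ∈ S} = S' := by
      ext x
      simp only [Set.mem_setOf_eq, hSdef, Set.mem_insert_iff]
      constructor
      · rintro (h | ⟨h, hx⟩)
        · exact absurd h x.2
        · simpa using hx
      · intro hx
        exact Or.inr ⟨x.2, by simpa using hx⟩
    have hvS : v ∈ S := Set.mem_insert v _
    have hsS : s ∈ S := Or.inr ⟨Ne.symm hvs, hs'⟩
    have htS : t ∉ S := by
      rintro (h | ⟨h, hx⟩)
      · exact hvt h.symm
      · exact ht' hx
    have hzS : ∀ w, w ∉ S → c v w = 0 := by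
      intro w hw
      have hwv : w ≠ v := fun h => hw (h ▸ hvS)
      have hw' : (⟨w, hwv⟩ : {x : ν // x ≠ v}) ∉ S' := fun h => hw (Or.inr ⟨hwv, h⟩)
      by_contra h
      have h1 : c' ⟨s, Ne.symm hvs⟩ ⟨w, hwv⟩ = ⊤ := by
        rw [hc']; exact if_pos ⟨rfl, h⟩
      exact hfin' (top_le_iff.mp (h1 ▸ single_le_cutCap c' S' hs' hw'))
    have heq : cutCap c S = cutCap c' S' := by
      rw [← himg, cutCap_subtype_eq c s v c' hc' S hvS hzS]
    exact ⟨S, ⟨hsS, htS, heq ▸ hfin'⟩, himg, heq⟩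
  refine ⟨⟨?_, ?_, ?_⟩, hcap, ?_⟩
  · -- MapsTo
    rintro S ⟨hs, ht, hfin⟩
    have h := hcap S hs ht hfin
    refine ⟨?_, ?_, fun htop => hfin (h ▸ htop)⟩
    · simpa using hs
    · simpa using ht
  · -- InjOn
    rintro S₁ ⟨hs₁, ht₁, hfin₁⟩ S₂ ⟨hs₂, ht₂, hfin₂⟩ himg
    ext x
    by_cases hx : x = v
    · subst hx
      simp [hmem S₁ hs₁ hfin₁, hmem S₂ hs₂ hfin₂]
    · have := Set.ext_iff.mp himg ⟨x, hx⟩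
      simpa using this
  · -- SurjOn
    rintro S' ⟨hs', ht', hfin'⟩
    obtain ⟨S, hS, himg, -⟩ := hsurj S' hs' ht' hfin'
    exact ⟨S, hS, himg⟩
  · -- sInf equality
    apply le_antisymm
    · refine le_sInf ?_
      rintro b ⟨S', hs', ht', rfl⟩
      by_cases hfin' : cutCap c' S' = ⊤
      · exact hfin' ▸ le_top
      · obtain ⟨S, hS, -, heq⟩ := hsurj S' hs' ht' hfin'
        exact sInf_le ⟨S, hS.1, hS.2.1, heq⟩
    · refine le_sInf ?_
      rintro b ⟨S, hs, ht, rfl⟩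
      by_cases hfin : cutCap c S = ⊤
      · exact hfin ▸ le_top
      · refine sInf_le ⟨{x : {x : ν // x ≠ v} | ↑x ∈ S}, ?_, ?_, ?_⟩
        · simpa using hs
        · simpa using ht
        · exact hcap S hs ht hfin
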